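/- Let n₁, n₂, n₃ be distinct primes, let k > 1 be a natural number with gcd(nᵢ, k) = 1 for i = 1, 2, 3, and suppose n = n₁·n₂·n₃ is a pseudoprime of basis k. Then for all natural numbers m ≥ 1 and j ≥ 1: n₁ divides k^(j·|n₂n₃ - n₁^m|) - 1, n₂ divides k^(j·|n₁n₃ - n₂^m|) - 1, and n₃ divides k^(j·|n₁n₂ - n₃^m|) - 1 (as integers). -/

import Mathlib

/-- `n` is a pseudoprime of basis `k`: an odd composite number, relatively prime
to `k`, with `n ∣ k^(n-1) - 1`. -/
def IsPseudoprime (k n : ℕ) : Prop :=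
  Odd n ∧ 1 < n ∧ ¬ n.Prime ∧ Nat.gcd k n = 1 ∧ (n : ℤ) ∣ (k : ℤ) ^ (n - 1) - 1

lemma aux_pseudo (p q r k : ℕ) (hp : p.Prime) (hg : Nat.gcd p k = 1)
    (hq : 1 ≤ q) (hr : 1 ≤ r)
    (hd : (p : ℤ) ∣ (k : ℤ) ^ (p * q * r - 1) - 1) (m j : ℕ) :
    (p : ℤ) ∣ (k : ℤ) ^ (j * ((q * r : ℤ) - (p : ℤ) ^ m).natAbs) - 1 := by
  haveI := Fact.mk hp
  set K : ZMod p := (k : ZMod p) with hKdef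
  have hK0 : K ≠ 0 := by
    rw [hKdef, Ne, ZMod.natCast_eq_zero_iff]
    exact (Nat.Prime.coprime_iff_not_dvd hp).mp hg
  have h1 : K ^ (p - 1) = 1 := ZMod.pow_card_sub_one_eq_one hK0
  have h2 : K ^ (p * q * r - 1) = 1 := by
    have := (ZMod.intCast_zmod_eq_zero_iff_dvd _ p).mpr hd
    push_cast at this
    rw [sub_eq_zero] at this
    exact this
  set d := orderOf K with hddef
  have hd1 : d ∣ p - 1 := orderOf_dvd_of_pow_eq_one h1
  have hd2 : d ∣ p * q * r - 1 := orderOf_dvd_of_pow_eq_one h2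
  have hp1 : 1 ≤ p := hp.one_lt.le
  have hpqr1 : 1 ≤ p * q * r := Nat.mul_pos (Nat.mul_pos hp1 hq) hr
  have dp : (d : ℤ) ∣ (p : ℤ) - 1 := by
    have := Int.natCast_dvd_natCast.mpr hd1
    rwa [Nat.cast_sub hp1] at this
  have dn : (d : ℤ) ∣ (p : ℤ) * q * r - 1 := by
    have := Int.natCast_dvd_natCast.mpr hd2
    rw [Nat.cast_sub hpqr1] at this
    push_cast at this
    exact this
  have dq : (d : ℤ) ∣ (q * r : ℤ) - 1 := by
    have h := dvd_sub dn (dp.mul_right ((q : ℤ) * r))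
    rw [show (q * r : ℤ) - 1 = ((p : ℤ) * q * r - 1) - ((p : ℤ) - 1) * ((q : ℤ) * r) by ring]
    exact h
  have dpm : (d : ℤ) ∣ (p : ℤ) ^ m - 1 := by
    refine dp.trans ?_
    have := sub_dvd_pow_sub_pow (p : ℤ) 1 m
    simpa using this
  have dt : (d : ℤ) ∣ (q * r : ℤ) - (p : ℤ) ^ m := by
    have h := dvd_sub dq dpm
    rw [show (q * r : ℤ) - (p : ℤ) ^ m = ((q * r : ℤ) - 1) - ((p : ℤ) ^ m - 1) by ring]
    exact h
  have dnat : d ∣ ((q * r : ℤ) - (p : ℤ) ^ m).natAbs := by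
    have := Int.natAbs_dvd_natAbs.mpr dt
    simpa using this
  have hpow : K ^ (j * ((q * r : ℤ) - (p : ℤ) ^ m).natAbs) = 1 := by
    apply orderOf_dvd_iff_pow_eq_one.mp
    exact dnat.mul_left j
  rw [← ZMod.intCast_zmod_eq_zero_iff_dvd]
  push_cast
  rw [sub_eq_zero]
  exact hpow

theorem pseudoprime_three_factors_dvd_abs_pow (n₁ n₂ n₃ k : ℕ)
    (h₁ : n₁.Prime) (h₂ : n₂.Prime) (h₃ : n₃.Prime)
    (h₁₂ : n₁ ≠ n₂) (h₁₃ : n₁ ≠ n₃) (h₂₃ : n₂ ≠ n₃) (hk : 1 < k)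
    (hg₁ : Nat.gcd n₁ k = 1) (hg₂ : Nat.gcd n₂ k = 1) (hg₃ : Nat.gcd n₃ k = 1)
    (hps : IsPseudoprime k (n₁ * n₂ * n₃)) :
    ∀ m j : ℕ, 1 ≤ m → 1 ≤ j →
      (n₁ : ℤ) ∣ (k : ℤ) ^ (j * ((n₂ * n₃ : ℤ) - (n₁ : ℤ) ^ m).natAbs) - 1 ∧
        (n₂ : ℤ) ∣ (k : ℤ) ^ (j * ((n₁ * n₃ : ℤ) - (n₂ : ℤ) ^ m).natAbs) - 1 ∧
          (n₃ : ℤ) ∣ (k : ℤ) ^ (j * ((n₁ * n₂ : ℤ) - (n₃ : ℤ) ^ m).natAbs) - 1 := by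
  intro m j _ _
  obtain ⟨-, -, -, -, hdvd⟩ := hps
  have hq₁ := h₁.one_lt.le
  have hq₂ := h₂.one_lt.le
  have hq₃ := h₃.one_lt.le
  have key : ∀ p : ℕ, p ∣ n₁ * n₂ * n₃ →
      (p : ℤ) ∣ (k : ℤ) ^ (n₁ * n₂ * n₃ - 1) - 1 := by
    intro p hp
    exact dvd_trans (Int.natCast_dvd_natCast.mpr hp) hdvd
  refine ⟨?_, ?_, ?_⟩
  · have h := key n₁ (Dvd.dvd.mul_right (dvd_mul_right n₁ n₂) n₃)
    exact aux_pseudo n₁ n₂ n₃ k h₁ hg₁ hq₂ hq₃ h m j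
  · have h := key n₂ (Dvd.dvd.mul_right (dvd_mul_left n₂ n₁) n₃)
    rw [show n₁ * n₂ * n₃ = n₂ * n₁ * n₃ by ring] at h
    exact aux_pseudo n₂ n₁ n₃ k h₂ hg₂ hq₁ hq₃ h m j
  · have h := key n₃ (dvd_mul_left n₃ (n₁ * n₂))
    rw [show n₁ * n₂ * n₃ = n₃ * n₁ * n₂ by ring] at h
    exact aux_pseudo n₃ n₁ n₂ k h₃ hg₃ hq₁ hq₂ h m j
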